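/- arXiv:math-ph/0501014 — 3 statements merged into one kernel-verified Lean document; each statement's English description precedes it below -/
import Mathlib

section
/- Let π : G̃ → G be a covering homomorphism of groups with central kernel Π. Define G̃^(E) = { g̃ ∈ G̃^E : ∀e, π(g̃(e)) = π(g̃(e⁻¹))⁻¹ } where E carries a fixed-point-free involution e ↦ e⁻¹. Then the map o : G̃^(E) → Π defined by o(g̃) = ∏_{e∈E⁺} g̃(e) g̃(e⁻¹) (for any orientation E⁺) is well-defined, i.e., takes values in Π and is independent of the orientation. -/
/-- the obstruction map `o : G̃^(E) → Π` is well defined: for a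
configuration `g̃ ∈ G̃^(E)` (i.e. `π(g̃ e) = π(g̃ (α e))⁻¹` for all `e`), there is a
single element `z` of the central kernel `Π = ker π` equal to the product
`∏_{e ∈ E⁺} g̃(e) g̃(α e)` for every orientation `E⁺` (enumerated by any list `l`
without duplicates containing exactly one edge of each pair `{e, α e}`, in any
order). -/
theorem stmt_5 {Gt G E : Type*} [Group Gt] [Group G] [Fintype E] [DecidableEq E]
    (π : Gt →* G) (hsurj : Function.Surjective π)
    (hcentral : π.ker ≤ Subgroup.center Gt)
    (α : E → E) (hinv : Function.Involutive α) (hfp : ∀ e, α e ≠ e)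
    (g : E → Gt) (hg : ∀ e, π (g e) = (π (g (α e)))⁻¹) :
    ∃ z : Gt, z ∈ π.ker ∧
      ∀ l : List E, l.Nodup → (∀ e, e ∈ l ↔ α e ∉ l) →
        (l.map (fun e => g e * g (α e))).prod = z := by
  classical
  -- each factor lies in the kernel
  have hker : ∀ e, g e * g (α e) ∈ π.ker := by
    intro e
    simp [MonoidHom.mem_ker, hg e]
  -- lift factors to the center, a commutative group
  set C := Subgroup.center Gt
  have hC : ∀ e, g e * g (α e) ∈ C := fun e => hcentral (hker e)
  set f : E → C := fun e => ⟨g e * g (α e), hC e⟩ with hf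
  -- the factor attached to `α e` equals that of `e`
  have hfα : ∀ e, f (α e) = f e := by
    intro e
    apply Subtype.ext
    have hc := (Subgroup.mem_center_iff.mp (hC e)) (g e)
    -- hc : g e * (g e * g (α e)) = (g e * g (α e)) * g e
    have : g e * (g (α e) * g e) = g e * (g e * g (α e)) := by
      rw [← mul_assoc, ← hc]
    have h2 : g (α e) * g e = g e * g (α e) := mul_left_cancel this
    simpa [hf, hinv e] using h2
  -- product over any valid list, computed in the center
  have key : ∀ l₁ l₂ : List E, l₁.Nodup → (∀ e, e ∈ l₁ ↔ α e ∉ l₁) →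
      l₂.Nodup → (∀ e, e ∈ l₂ ↔ α e ∉ l₂) →
      (l₁.map (fun e => g e * g (α e))).prod = (l₂.map (fun e => g e * g (α e))).prod := by
    intro l₁ l₂ h₁ hc₁ h₂ hc₂
    have coeprod : ∀ l : List E, (l.map (fun e => g e * g (α e))).prod
        = (((l.map f).prod : C) : Gt) := by
      intro l
      rw [SubmonoidClass.coe_list_prod, List.map_map]
      rfl
    rw [coeprod l₁, coeprod l₂]
    congr 1
    letI : CommMonoid C := by open IsMulCommutative in infer_instance
    rw [← List.prod_toFinset f h₁, ← List.prod_toFinset f h₂]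
    refine Finset.prod_nbij' (fun e => if e ∈ l₂ then e else α e)
      (fun e => if e ∈ l₁ then e else α e) ?_ ?_ ?_ ?_ ?_
    · intro e he
      rw [List.mem_toFinset] at he
      by_cases h : e ∈ l₂
      · simp [h]
      · have : α e ∈ l₂ := by
          by_contra hne
          exact h ((hc₂ e).mpr hne)
        simp [h, this]
    · intro e he
      rw [List.mem_toFinset] at he
      by_cases h : e ∈ l₁
      · simp [h]
      · have : α e ∈ l₁ := by
          by_contra hne
          exact h ((hc₁ e).mpr hne)
        simp [h, this]
    · intro e he
      rw [List.mem_toFinset] at he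
      by_cases h : e ∈ l₂
      · simp [h, he]
      · have hαe : α e ∈ l₂ := by
          by_contra hne
          exact h ((hc₂ e).mpr hne)
        have hα₁ : α e ∉ l₁ := (hc₁ e).mp he
        simp [h, hαe, hα₁, hinv e]
    · intro e he
      rw [List.mem_toFinset] at he
      by_cases h : e ∈ l₁
      · simp [h, he]
      · have hαe : α e ∈ l₁ := by
          by_contra hne
          exact h ((hc₁ e).mpr hne)
        have hα₂ : α e ∉ l₂ := (hc₂ e).mp he
        simp [h, hαe, hα₂, hinv e]
    · intro e _
      show f e = f (if e ∈ l₂ then e else α e)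
      by_cases h : e ∈ l₂
      · rw [if_pos h]
      · rw [if_neg h]
        exact (hfα e).symm
  by_cases h : ∃ l : List E, l.Nodup ∧ (∀ e, e ∈ l ↔ α e ∉ l)
  · obtain ⟨l₀, hn₀, hc₀⟩ := h
    refine ⟨(l₀.map (fun e => g e * g (α e))).prod, ?_, ?_⟩
    · exact Subgroup.list_prod_mem _ (by
        intro x hx
        obtain ⟨e, _, rfl⟩ := List.mem_map.mp hx
        exact hker e)
    · intro l hn hc
      exact key l l₀ hn hc hn₀ hc₀
  · exact ⟨1, Subgroup.one_mem _, fun l hn hc => absurd ⟨l, hn, hc⟩ h⟩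
end

section
/- With notation as in the definition of the obstruction map: the map o : G̃^(E) → Π is invariant under the gauge group action, i.e., for j = ((j_v)_{v∈V}, (z_e)_{e∈E}) with (z_e) in the kernel J_Π of the face-product map, and (j·g̃)(e) = j_{t(e)}⁻¹ g̃(e) j_{s(e)} z_e, one has o(j·g̃) = o(g̃). -/
private lemma central_prod_mul {Gt E : Type*} [Group Gt] (l : List E) (f h : E → Gt)
    (hf : ∀ e, f e ∈ Subgroup.center Gt) :
    (l.map (fun e => f e * h e)).prod = (l.map f).prod * (l.map h).prod := by
  induction l with
  | nil => simp
  | cons a tl ih =>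
    simp only [List.map_cons, List.prod_cons, ih]
    have hP : (tl.map f).prod ∈ Subgroup.center Gt :=
      Subgroup.list_prod_mem _ (by simpa using fun e _ => hf e)
    have hc := Subgroup.mem_center_iff.mp hP (h a)
    rw [mul_assoc (f a), ← mul_assoc (h a), hc, mul_assoc, ← mul_assoc]

private lemma conj_central {Gt : Type*} [Group Gt] (a b x y u v : Gt)
    (hu : ∀ w, u * w = w * u) (hv : ∀ w, v * w = w * v)
    (hxy : ∀ w, (x * y) * w = w * (x * y)) :
    a⁻¹ * x * b * u * (b⁻¹ * y * a * v) = u * v * (x * y) := by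
  calc a⁻¹ * x * b * u * (b⁻¹ * y * a * v)
      = a⁻¹ * x * b * (b⁻¹ * y * a * v) * u := by
        rw [mul_assoc (a⁻¹ * x * b) u (b⁻¹ * y * a * v), hu, ← mul_assoc]
    _ = a⁻¹ * x * b * (b⁻¹ * y * a) * v * u := by
        rw [← mul_assoc (a⁻¹ * x * b) (b⁻¹ * y * a) v]
    _ = a⁻¹ * (x * y) * a * v * u := by group
    _ = (x * y) * a⁻¹ * a * v * u := by
        rw [← hxy a⁻¹]
    _ = (x * y) * v * u := by group
    _ = u * v * (x * y) := by
        rw [hxy v, mul_assoc v, hxy u, ← mul_assoc, hv u]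


/-- invariance of the obstruction map under the discrete gauge group.
For a gauge transformation `j = ((j_v), (z_e))` with `(z_e)` valued in the central
kernel `Π = ker π` and total product `∏_{e ∈ E} z_e = 1` (as holds for elements of
`J_Π`), the transformed configuration `(j·g̃)(e) = j_{t e}⁻¹ g̃(e) j_{s e} z_e` has
the same obstruction as `g̃`: for every orientation `E⁺` (enumerated by a list `l`),
`∏_{e ∈ E⁺} (j·g̃)(e) (j·g̃)(α e) = ∏_{e ∈ E⁺} g̃(e) g̃(α e)`. -/
theorem stmt_6 {Gt G V E : Type*} [Group Gt] [Group G] [Fintype E] [DecidableEq E]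
    (π : Gt →* G) (hcentral : π.ker ≤ Subgroup.center Gt)
    (α : E → E) (hinv : Function.Involutive α) (hfp : ∀ e, α e ≠ e)
    (s t : E → V) (hst : ∀ e, s (α e) = t e)
    (g : E → Gt) (hg : ∀ e, π (g e) = (π (g (α e)))⁻¹)
    (j : V → Gt) (z : E → Gt) (hz : ∀ e, z e ∈ π.ker)
    (hztot : ∀ l : List E, l.Nodup → (∀ e, e ∈ l) → (l.map z).prod = 1)
    (l : List E) (hl : l.Nodup) (hor : ∀ e, e ∈ l ↔ α e ∉ l) :
    (l.map (fun e => ((j (t e))⁻¹ * g e * j (s e) * z e) *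
        ((j (t (α e)))⁻¹ * g (α e) * j (s (α e)) * z (α e)))).prod =
    (l.map (fun e => g e * g (α e))).prod := by
  have hc : ∀ e, z e ∈ Subgroup.center Gt := fun e => hcentral (hz e)
  have hg' : ∀ e, g e * g (α e) ∈ Subgroup.center Gt := fun e =>
    hcentral (by simp [MonoidHom.mem_ker, hg e])
  have hts : ∀ e, t (α e) = s e := fun e => by
    have := hst (α e); rw [hinv e] at this; exact this.symm
  have key : ∀ e, ((j (t e))⁻¹ * g e * j (s e) * z e) *
      ((j (t (α e)))⁻¹ * g (α e) * j (s (α e)) * z (α e)) =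
      (z e * z (α e)) * (g e * g (α e)) := by
    intro e
    rw [hst e, hts e]
    have c1 : ∀ w, z e * w = w * z e := fun w => (Subgroup.mem_center_iff.mp (hc e) w).symm
    have c2 : ∀ w, z (α e) * w = w * z (α e) := fun w => (Subgroup.mem_center_iff.mp (hc (α e)) w).symm
    have c3 : ∀ w, (g e * g (α e)) * w = w * (g e * g (α e)) := fun w => (Subgroup.mem_center_iff.mp (hg' e) w).symm
    exact conj_central (j (t e)) (j (s e)) (g e) (g (α e)) (z e) (z (α e)) c1 c2 c3
  have hzkey : (l.map (fun e => z e * z (α e))).prod = 1 := by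
    have hmapnd : (l.map α).Nodup := hl.map hinv.injective
    have hdisj : ∀ a ∈ l, a ∉ l.map α := by
      intro a ha hmem
      obtain ⟨b, hb, rfl⟩ := List.mem_map.mp hmem
      exact ((hor (α b)).mp ha) (by rw [hinv b]; exact hb)
    have hnd : (l ++ l.map α).Nodup :=
      List.nodup_append'.mpr ⟨hl, hmapnd, fun a ha => hdisj a ha⟩
    have hcomplete : ∀ e, e ∈ l ++ l.map α := by
      intro e
      by_cases h : e ∈ l
      · exact List.mem_append.mpr (Or.inl h)
      · refine List.mem_append.mpr (Or.inr ?_)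
        have : α e ∈ l := by
          by_contra h'
          exact h ((hor e).mpr h')
        exact List.mem_map.mpr ⟨α e, this, hinv e⟩
    have := hztot (l ++ l.map α) hnd hcomplete
    rw [List.map_append, List.prod_append, List.map_map] at this
    rw [central_prod_mul l z (fun e => z (α e)) hc]
    simpa [Function.comp_def] using this
  have := central_prod_mul l (fun e => z e * z (α e)) (fun e => g e * g (α e))
    (fun e => mul_mem (hc e) (hc (α e)))
  simp only [key]
  rw [this, hzkey, one_mul]
end

section
/- Cut-and-paste preserves single-facedness: let Γ = (E; σ, α) be a fat graph whose face permutation φ = ασ⁻¹ is a single cycle containing all of E, and which has a single vertex (σ is a single cycle). For e ∈ E write φ = (e, e₁,…,e_r, d, α(e), e_{r+1},…,e_s) and set φ' = (e, d, e₁,…,e_r, α(e), e_{r+1},…,e_s), σ' = (φ')⁻¹α. Then the fat graph K_e(Γ) = (E; σ', α) also has a single face and a single vertex. -/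
open Equiv Equiv.Perm

section Aux

variable {E : Type*} [Fintype E] [DecidableEq E]

/-- Deleting `b` from a full cycle: if `π` is a full cycle and `π a = b`, then
`π * swap a b` fixes `b` and all other points are on the cycle of `a`. -/
private lemma aux_del (π : Equiv.Perm E) (hπ : ∀ x y, π.SameCycle x y)
    {a b : E} (hab : π a = b) (hne : a ≠ b) :
    ∀ x, x ≠ b → (π * Equiv.swap a b).SameCycle a x := by
  set π₁ := π * Equiv.swap a b with hπ₁
  have key : ∀ k : ℕ, (π ^ k) a ≠ b → π₁.SameCycle a ((π ^ k) a) := by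
    intro k
    induction k with
    | zero => intro _; rw [pow_zero]; exact Equiv.Perm.SameCycle.refl _ _
    | succ k ih =>
      intro hk
      have hstep : (π ^ (k + 1)) a = π ((π ^ k) a) := by
        rw [pow_succ', Equiv.Perm.mul_apply]
      by_cases hzb : (π ^ k) a = b
      · -- π^{k+1} a = π b = π₁ a
        have : (π ^ (k + 1)) a = π₁ a := by
          rw [hstep, hzb, hπ₁, Equiv.Perm.mul_apply, Equiv.swap_apply_left]
        rw [this]
        exact Equiv.Perm.SameCycle.refl _ _ |>.apply_right
      · have hza : (π ^ k) a ≠ a := by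
          intro h
          apply hk
          rw [hstep, h, hab]
        have : (π ^ (k + 1)) a = π₁ ((π ^ k) a) := by
          rw [hstep, hπ₁, Equiv.Perm.mul_apply,
            Equiv.swap_apply_of_ne_of_ne hza hzb]
        rw [this]
        exact (ih hzb).apply_right
  intro x hx
  obtain ⟨k, _, hk⟩ := (hπ a x).exists_pow_eq'
  subst hk
  exact key k hx

/-- Inserting `b` into a cycle after `c`. -/
private lemma aux_ins (π₁ : Equiv.Perm E) {b c : E} (hb : π₁ b = b) (hcb : c ≠ b)
    (hcyc : ∀ x, x ≠ b → π₁.SameCycle c x) :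
    ∀ x y, (π₁ * Equiv.swap b c).SameCycle x y := by
  set π₂ := π₁ * Equiv.swap b c with hπ₂
  have hπ₂b : π₂ b = π₁ c := by
    rw [hπ₂, Equiv.Perm.mul_apply, Equiv.swap_apply_left]
  have hπ₂c : π₂ c = b := by
    rw [hπ₂, Equiv.Perm.mul_apply, Equiv.swap_apply_right, hb]
  have key : ∀ k : ℕ, π₂.SameCycle b ((π₁ ^ (k + 1)) c) := by
    intro k
    induction k with
    | zero =>
      rw [pow_one, ← hπ₂b]
      exact Equiv.Perm.SameCycle.refl _ _ |>.apply_right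
    | succ k ih =>
      have hstep : (π₁ ^ (k + 1 + 1)) c = π₁ ((π₁ ^ (k + 1)) c) := by
        rw [pow_succ', Equiv.Perm.mul_apply]
      by_cases hzc : (π₁ ^ (k + 1)) c = c
      · rw [hstep, hzc, ← hπ₂b]
        exact Equiv.Perm.SameCycle.refl _ _ |>.apply_right
      · by_cases hzb : (π₁ ^ (k + 1)) c = b
        · rw [hstep, hzb, hb]
        · have : (π₁ ^ (k + 1 + 1)) c = π₂ ((π₁ ^ (k + 1)) c) := by
            rw [hstep, hπ₂, Equiv.Perm.mul_apply,
              Equiv.swap_apply_of_ne_of_ne hzb hzc]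
          rw [this]
          exact ih.apply_right
  have main : ∀ x, π₂.SameCycle b x := by
    intro x
    by_cases hxb : x = b
    · rw [hxb]
    · by_cases hxc : x = c
      · rw [hxc, ← hπ₂c]
        exact (Equiv.Perm.SameCycle.refl _ _ |>.apply_right).symm
      · obtain ⟨k, hk0, _, hk⟩ := (hcyc x hxb).exists_pow_eq''
        obtain ⟨k, rfl⟩ := Nat.exists_eq_add_of_lt hk0
        rw [← hk, zero_add]
        exact key k
  intro x y
  exact (main x).symm.trans (main y)

/-- A full cycle times `swap a b * swap b c` where `π a = b` is again a full cycle. -/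
private lemma aux_key (π : Equiv.Perm E) (hπ : ∀ x y, π.SameCycle x y)
    {a b c : E} (hab : π a = b) (h1 : a ≠ b) (h2 : c ≠ b) :
    ∀ x y, (π * Equiv.swap a b * Equiv.swap b c).SameCycle x y := by
  have hd := aux_del π hπ hab h1
  have hb : (π * Equiv.swap a b) b = b := by
    rw [Equiv.Perm.mul_apply, Equiv.swap_apply_right, hab]
  exact aux_ins _ hb h2 (fun x hx => ((hd c h2).symm.trans (hd x hx)))

end Aux

/-- the cut-and-paste operation `K_e` preserves the property of
having a single face and a single vertex.  Here `Γ = (E; σ, α)` is a fat graph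
with face permutation `φ = α ∘ σ⁻¹` (a single cycle through all of `E`) and a
single vertex (`σ` is a single cycle through all of `E`).  Writing
`d = φ⁻¹(α e)` and `p = φ⁻¹(d)`, the new face permutation `φ'` sends `e ↦ d`,
`p ↦ α e`, `d ↦ φ e` and agrees with `φ` elsewhere (it is `φ` itself in the
degenerate case `p = e`), and the new vertex permutation is `σ' = φ'⁻¹ ∘ α`. -/
theorem stmt_12 {E : Type*} [Fintype E] [DecidableEq E]
    (σ α : Equiv.Perm E) (hinv : ∀ x, α (α x) = x) (hfp : ∀ x, α x ≠ x)
    (hface : ∀ x y : E, Equiv.Perm.SameCycle (σ.symm.trans α) x y)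
    (hvertex : ∀ x y : E, σ.SameCycle x y)
    (e : E)
    (hnd : (σ.symm.trans α).symm (α e) ≠ e)
    (φ' : Equiv.Perm E)
    (hspec :
      if (σ.symm.trans α).symm ((σ.symm.trans α).symm (α e)) = e then
        φ' = σ.symm.trans α
      else
        ∀ x : E, φ' x =
          if x = e then (σ.symm.trans α).symm (α e)
          else if x = (σ.symm.trans α).symm ((σ.symm.trans α).symm (α e)) then α e
          else if x = (σ.symm.trans α).symm (α e) then (σ.symm.trans α) e
          else (σ.symm.trans α) x) :
    (∀ x y : E, Equiv.Perm.SameCycle φ' x y) ∧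
    (∀ x y : E, Equiv.Perm.SameCycle (α.trans φ'.symm) x y) := by
  classical
  set φ : Equiv.Perm E := σ.symm.trans α with hφdef
  set d : E := φ.symm (α e) with hddef
  set p : E := φ.symm d with hpdef
  have hαs : ∀ x, α.symm x = α x := by
    intro x
    apply α.injective
    rw [Equiv.apply_symm_apply, hinv]
  have hφ_apply : ∀ x, φ x = α (σ.symm x) := fun x => rfl
  have hφs : ∀ x, φ.symm x = σ (α x) := by
    intro x
    rw [hφdef, Equiv.symm_trans_apply, Equiv.symm_symm, hαs]
  have hd : d = σ e := by rw [hddef, hφs, hinv]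
  have hφd : φ d = α e := by rw [hddef, Equiv.apply_symm_apply]
  have hφp : φ p = d := by rw [hpdef, Equiv.apply_symm_apply]
  have hde : d ≠ e := hnd
  have hpd : p ≠ d := by
    intro h
    have hfix : φ d = d := ((congrArg φ h).symm).trans hφp
    obtain ⟨n, hn⟩ := hface d (α d)
    rw [Equiv.Perm.zpow_apply_eq_self_of_apply_eq_self hfix n] at hn
    exact hfp d hn.symm
  by_cases hdeg : p = e
  · -- degenerate case: φ' = φ
    rw [if_pos hdeg] at hspec
    have hσeq : α.trans φ'.symm = σ := by
      ext x
      rw [Equiv.trans_apply, hspec, hφs, hinv]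
    constructor
    · intro x y; rw [hspec]; exact hface x y
    · intro x y; rw [hσeq]; exact hvertex x y
  · rw [if_neg hdeg] at hspec
    have hpe : p ≠ e := hdeg
    -- φ' = φ * swap p d * swap d e
    have hφ'eq : φ' = φ * Equiv.swap p d * Equiv.swap d e := by
      ext x
      rw [hspec x]
      simp only [Equiv.Perm.mul_apply]
      by_cases hxe : x = e
      · subst hxe
        rw [if_pos rfl, Equiv.swap_apply_right, Equiv.swap_apply_right, hφp]
      · by_cases hxp : x = p
        · subst hxp
          rw [if_neg hxe, if_pos rfl, Equiv.swap_apply_of_ne_of_ne hpd hpe,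
            Equiv.swap_apply_left, hφd]
        · by_cases hxd : x = d
          · subst hxd
            rw [if_neg hxe, if_neg hxp, if_pos rfl, Equiv.swap_apply_left,
              Equiv.swap_apply_of_ne_of_ne (Ne.symm hpe) (Ne.symm hde)]
          · rw [if_neg hxe, if_neg hxp, if_neg hxd,
              Equiv.swap_apply_of_ne_of_ne hxd hxe,
              Equiv.swap_apply_of_ne_of_ne hxp hxd]
    -- distinctness of preimages under σ
    have hse : σ.symm e ≠ e := fun h =>
      hde (hd.trans ((Equiv.symm_apply_eq σ).mp h).symm)
    have hsp : σ.symm p ≠ e := by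
      intro h
      apply hpd
      rw [← Equiv.apply_symm_apply σ p, h, ← hd]
    have hspse : σ.symm p ≠ σ.symm e := fun h => hpe (σ.symm.injective h)
    -- α.trans φ'.symm = σ * swap (σ.symm e) e * swap e (σ.symm p)
    have hσ'eq : α.trans φ'.symm =
        σ * Equiv.swap (σ.symm e) e * Equiv.swap e (σ.symm p) := by
      have h : ∀ x, φ' ((σ * Equiv.swap (σ.symm e) e * Equiv.swap e (σ.symm p)) x)
          = α x := by
        intro x
        simp only [Equiv.Perm.mul_apply]
        by_cases hxe : x = e
        · subst hxe
          rw [Equiv.swap_apply_left, Equiv.swap_apply_of_ne_of_ne hspse hsp,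
            Equiv.apply_symm_apply, hspec p, if_neg hpe, if_pos rfl]
        · by_cases hxp : x = σ.symm p
          · subst hxp
            rw [Equiv.swap_apply_right, Equiv.swap_apply_right,
              Equiv.apply_symm_apply, hspec e, if_pos rfl, ← hφ_apply, hφp]
          · by_cases hxse : x = σ.symm e
            · subst hxse
              rw [Equiv.swap_apply_of_ne_of_ne hse (Ne.symm hspse),
                Equiv.swap_apply_left, ← hd, hspec d,
                if_neg hde, if_neg (Ne.symm hpd), if_pos rfl, hφ_apply]
            · rw [Equiv.swap_apply_of_ne_of_ne hxe hxp,
                Equiv.swap_apply_of_ne_of_ne hxse hxe]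
              have h1 : σ x ≠ e := fun h => hxse (by rw [← h, Equiv.symm_apply_apply])
              have h2 : σ x ≠ p := fun h => hxp (by rw [← h, Equiv.symm_apply_apply])
              have h3 : σ x ≠ d := by
                rw [hd]
                exact fun h => hxe (σ.injective h)
              rw [hspec (σ x), if_neg h1, if_neg h2, if_neg h3, hφ_apply,
                Equiv.symm_apply_apply]
      ext x
      rw [Equiv.trans_apply, Equiv.symm_apply_eq]
      exact (h x).symm
    constructor
    · intro x y
      rw [hφ'eq]
      exact aux_key φ hface hφp hpd (Ne.symm hde) x y
    · intro x y
      rw [hσ'eq]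
      exact aux_key σ hvertex (σ.apply_symm_apply e) hse hsp x y
end
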